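/- Let D ⊊ ℝⁿ be an open set with nonempty boundary, let f : D → ℝⁿ be a homeomorphism of D onto an open set fD ⊊ ℝⁿ with nonempty boundary, and suppose there is L ≥ 1 such that ĉ_D(x,y)/L ≤ ĉ_{fD}(f(x), f(y)) ≤ L·ĉ_D(x,y) for all x, y ∈ D. Then f has linear dilatation at most L² at every point: for every z ∈ D, limsup_{r→0⁺} [ sup{|f(x) − f(z)| : x ∈ D, |x−z| = r} / inf{|f(y) − f(z)| : y ∈ D, |y−z| = r} ] ≤ L². -/

import Mathlib

open Set Metric Filter
open Topology

/-- The `ĉ` metric: `ĉ_D(x,y) = sup_{p ∈ ∂D} |x−y| / max(|x−p|, |y−p|)`. -/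
noncomputable def ctilde {E : Type*} [SeminormedAddCommGroup E] (D : Set E) (x y : E) : ℝ :=
  ⨆ p : frontier D, ‖x - y‖ / max ‖x - (p : E)‖ ‖y - (p : E)‖

lemma ctilde_le_div {E : Type*} [SeminormedAddCommGroup E] (D : Set E) (x y : E) (d : ℝ)
    (hd : 0 < d) (h : ∀ p ∈ frontier D, d ≤ ‖y - p‖) :
    ctilde D x y ≤ ‖x - y‖ / d := by
  refine Real.iSup_le (fun p => ?_) (by positivity)
  exact div_le_div_of_nonneg_left (norm_nonneg _) hd (le_trans (h p p.2) (le_max_right _ _))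

lemma le_ctilde {E : Type*} [SeminormedAddCommGroup E] (D : Set E) (x y : E)
    (hfr : (frontier D).Nonempty) (hd : 0 < infDist y (frontier D)) :
    ‖x - y‖ / (infDist y (frontier D) + ‖x - y‖) ≤ ctilde D x y := by
  set d := infDist y (frontier D) with hdd
  set r := ‖x - y‖ with hr
  have hr0 : 0 ≤ r := norm_nonneg _
  have hdp : ∀ p ∈ frontier D, d ≤ ‖y - p‖ := fun p hp => by
    rw [← dist_eq_norm]; exact infDist_le_dist_of_mem hp
  have hbdd : BddAbove (Set.range fun p : frontier D => r / max ‖x - (p:E)‖ ‖y - (p:E)‖) := by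
    refine ⟨r / d, ?_⟩
    rintro _ ⟨p, rfl⟩
    exact div_le_div_of_nonneg_left hr0 hd (le_trans (hdp p p.2) (le_max_right _ _))
  have hctnn : 0 ≤ ctilde D x y := Real.iSup_nonneg (fun p => by positivity)
  rcases eq_or_lt_of_le hr0 with h0 | hrpos
  · rw [← h0]; simpa using hctnn
  by_contra hcon
  push_neg at hcon
  obtain ⟨p₀, hp₀⟩ := hfr
  have hterm : ∀ p : frontier D, r / max ‖x - (p:E)‖ ‖y - (p:E)‖ ≤ ctilde D x y :=
    fun p => le_ciSup hbdd p
  have hmaxpos : ∀ p : frontier D, 0 < max ‖x - (p:E)‖ ‖y - (p:E)‖ :=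
    fun p => lt_of_lt_of_le (lt_of_lt_of_le hd (hdp p p.2)) (le_max_right _ _)
  have hc0 : 0 < ctilde D x y :=
    lt_of_lt_of_le (div_pos hrpos (hmaxpos ⟨p₀, hp₀⟩)) (hterm ⟨p₀, hp₀⟩)
  set c := ctilde D x y with hcdef
  have h1 : c * (d + r) < r := by
    have := (lt_div_iff₀ (by positivity : (0:ℝ) < d + r)).mp hcon
    linarith
  have hδ : 0 < r / c - (d + r) := by
    rw [sub_pos, lt_div_iff₀ hc0]; linarith
  obtain ⟨p, hpF, hpd⟩ := (infDist_lt_iff ⟨p₀, hp₀⟩).mp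
    (show infDist y (frontier D) < d + (r / c - (d + r)) by rw [← hdd]; linarith)
  rw [dist_eq_norm] at hpd
  have hmax : max ‖x - p‖ ‖y - p‖ ≤ ‖y - p‖ + r := by
    refine max_le ?_ (le_add_of_nonneg_right hr0)
    have := norm_sub_le_norm_sub_add_norm_sub x y p
    linarith
  have hden : max ‖x - p‖ ‖y - p‖ < r / c := by
    calc max ‖x - p‖ ‖y - p‖ ≤ ‖y - p‖ + r := hmax
    _ < (d + (r / c - (d + r))) + r := by linarith
    _ = r / c := by ring
  have hfinal : c < r / max ‖x - p‖ ‖y - p‖ := by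
    have h2 : c = r / (r / c) := by field_simp
    rw [h2]
    exact div_lt_div_of_pos_left hrpos (hmaxpos ⟨p, hpF⟩) hden
  exact absurd (hterm ⟨p, hpF⟩) (not_le.mpr hfinal)

lemma hHm_aux (L r dz d' : ℝ) (hL0 : 0 < L) (hr : 0 < r) (hdz : 0 < dz) :
    L ^ 2 * (1 + 2 * L * r / dz) * ((dz + r) / dz) * (d' * r / (L * (dz + r))) =
      L * r * (d' + 2 * L * r * d' / dz) / dz := by
  field_simp

/-- Theorem: if `f` is a homeomorphism of an open set `D ⊊ ℝⁿ` (with nonempty boundary)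
onto an open set `V = f(D) ⊊ ℝⁿ` (with nonempty boundary) which is `L`-bilipschitz with
respect to the `ĉ` metrics, then at every `z ∈ D` the linear dilatation of `f` is at most
`L²`:
`limsup_{r→0⁺} sup{|f(x)−f(z)| : x ∈ D, |x−z| = r} / inf{|f(y)−f(z)| : y ∈ D, |y−z| = r} ≤ L²`. -/
theorem ctilde_bilipschitz_quasiconformal {n : ℕ} (hn : 1 ≤ n)
    (D V : Set (EuclideanSpace ℝ (Fin n)))
    (hD : IsOpen D) (hDproper : D ≠ Set.univ) (hDfr : (frontier D).Nonempty)
    (hV : IsOpen V) (hVproper : V ≠ Set.univ) (hVfr : (frontier V).Nonempty)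
    (f g : EuclideanSpace ℝ (Fin n) → EuclideanSpace ℝ (Fin n))
    (himg : f '' D = V) (hfc : ContinuousOn f D) (hfinj : Set.InjOn f D)
    (hgc : ContinuousOn g V) (hgf : ∀ x ∈ D, g (f x) = x)
    (L : ℝ) (hL : 1 ≤ L)
    (hbilip : ∀ x ∈ D, ∀ y ∈ D,
      ctilde D x y / L ≤ ctilde V (f x) (f y) ∧ ctilde V (f x) (f y) ≤ L * ctilde D x y) :
    ∀ z ∈ D,
      Filter.limsup
        (fun r : ℝ =>
          sSup {d : ℝ | ∃ x ∈ D, ‖x - z‖ = r ∧ d = ‖f x - f z‖} /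
            sInf {d : ℝ | ∃ y ∈ D, ‖y - z‖ = r ∧ d = ‖f y - f z‖})
        (nhdsWithin (0 : ℝ) (Set.Ioi 0)) ≤ L ^ 2 := by
  intro z hz
  have hL0 : (0:ℝ) < L := lt_of_lt_of_le one_pos hL
  have hzV : f z ∈ V := himg ▸ ⟨z, hz, rfl⟩
  have hzfr : z ∉ frontier D := fun h => (hD.frontier_eq ▸ h).2 hz
  have hdz : 0 < infDist z (frontier D) :=
    (isClosed_frontier.notMem_iff_infDist_pos hDfr).mp hzfr
  set dz := infDist z (frontier D) with hdzdef
  have hzVfr : f z ∉ frontier V := fun h => (hV.frontier_eq ▸ h).2 hzV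
  have hd' : 0 < infDist (f z) (frontier V) :=
    (isClosed_frontier.notMem_iff_infDist_pos hVfr).mp hzVfr
  set d' := infDist (f z) (frontier V) with hd'def
  obtain ⟨ρ, hρ0, hρ⟩ := Metric.isOpen_iff.mp hD z hz
  set r0 := min ρ (dz / (2 * L)) with hr0def
  have hr00 : 0 < r0 := lt_min hρ0 (by positivity)
  set S : ℝ → Set ℝ := fun r => {d : ℝ | ∃ x ∈ D, ‖x - z‖ = r ∧ d = ‖f x - f z‖} with hS
  set H : ℝ → ℝ := fun r => L ^ 2 * (1 + 2 * L * r / dz) * ((dz + r) / dz) with hH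
  have hdpD : ∀ p ∈ frontier D, dz ≤ ‖z - p‖ := fun p hp => by
    rw [← dist_eq_norm]; exact infDist_le_dist_of_mem hp
  have hdpV : ∀ p ∈ frontier V, d' ≤ ‖f z - p‖ := fun p hp => by
    rw [← dist_eq_norm]; exact infDist_le_dist_of_mem hp
  have key : ∀ r ∈ Set.Ioo (0:ℝ) r0,
      0 ≤ sSup (S r) / sInf (S r) ∧ sSup (S r) / sInf (S r) ≤ H r := by
    intro r hr
    obtain ⟨hrpos, hrlt⟩ := hr
    have hrρ : r < ρ := lt_of_lt_of_le hrlt (min_le_left _ _)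
    have hrL : L * r < dz / 2 := by
      have h1 : r < dz / (2 * L) := lt_of_lt_of_le hrlt (min_le_right _ _)
      have := (mul_lt_mul_iff_right₀ hL0).mpr h1
      rw [show L * (dz / (2 * L)) = dz / 2 by field_simp] at this
      exact this
    -- membership facts
    have hSnn : ∀ s ∈ S r, 0 ≤ s := by rintro _ ⟨x, hx, hxr, rfl⟩; positivity
    have hne : (S r).Nonempty := by
      set e : EuclideanSpace ℝ (Fin n) := EuclideanSpace.single (⟨0, hn⟩ : Fin n) (1:ℝ) with he
      have hen : ‖e‖ = 1 := by rw [he, EuclideanSpace.norm_single]; norm_num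
      refine ⟨‖f (z + r • e) - f z‖, z + r • e, ?_, ?_, rfl⟩
      · apply hρ
        rw [Metric.mem_ball, dist_eq_norm, add_sub_cancel_left, norm_smul, hen,
          Real.norm_eq_abs, abs_of_pos hrpos, mul_one]
        exact hrρ
      · rw [add_sub_cancel_left, norm_smul, hen, Real.norm_eq_abs, abs_of_pos hrpos, mul_one]
    have hupX : ∀ s ∈ S r, s * dz ≤ L * r * (d' + s) := by
      rintro _ ⟨x, hxD, hxr, rfl⟩
      set s := ‖f x - f z‖ with hsdef
      have h3 : s / (d' + s) ≤ ctilde V (f x) (f z) := le_ctilde V (f x) (f z) hVfr hd'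
      have h2 : ctilde D x z ≤ r / dz := by
        have := ctilde_le_div D x z dz hdz hdpD
        rwa [hxr] at this
      have h1 : ctilde V (f x) (f z) ≤ L * ctilde D x z := (hbilip x hxD z hz).2
      have hch : s / (d' + s) ≤ (L * r) / dz := by
        calc s / (d' + s) ≤ L * ctilde D x z := le_trans h3 h1
        _ ≤ L * (r / dz) := by nlinarith [h2]
        _ = L * r / dz := by ring
      have := (div_le_div_iff₀ (by positivity) hdz).mp hch
      nlinarith [this]
    have hbddS : BddAbove (S r) := by
      refine ⟨2 * L * r * d' / dz, fun s hs => ?_⟩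
      rw [le_div_iff₀ hdz]
      nlinarith [hupX s hs, hSnn s hs, hrL]
    have hlowB : ∀ t ∈ S r, d' * r / (L * (dz + r)) ≤ t := by
      rintro _ ⟨y, hyD, hyr, rfl⟩
      set t := ‖f y - f z‖ with htdef
      have h3 : r / (dz + r) ≤ ctilde D y z := by
        have := le_ctilde D y z hDfr hdz
        rwa [hyr] at this
      have h1 : ctilde D y z / L ≤ ctilde V (f y) (f z) := (hbilip y hyD z hz).1
      have h2 : ctilde V (f y) (f z) ≤ t / d' := ctilde_le_div V (f y) (f z) d' hd' hdpV
      have hch : r / (dz + r) / L ≤ t / d' := by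
        refine le_trans ?_ (le_trans h1 h2)
        gcongr
      rw [div_div] at hch
      have := (div_le_div_iff₀ (by positivity) hd').mp hch
      rw [div_le_iff₀ (by positivity)]
      nlinarith [this]
    set a := sSup (S r) with ha
    set b := sInf (S r) with hbdefn
    obtain ⟨s₀, hs₀⟩ := hne
    have ha0 : 0 ≤ a := le_trans (hSnn s₀ hs₀) (le_csSup hbddS hs₀)
    have hm0 : 0 < d' * r / (L * (dz + r)) := by positivity
    have hb : d' * r / (L * (dz + r)) ≤ b := le_csInf ⟨s₀, hs₀⟩ hlowB
    have hb0 : 0 < b := lt_of_lt_of_le hm0 hb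
    have haup : a ≤ 2 * L * r * d' / dz := csSup_le ⟨s₀, hs₀⟩ (fun s hs => by
      rw [le_div_iff₀ hdz]; nlinarith [hupX s hs, hSnn s hs, hrL])
    have hadz : a * dz ≤ L * r * (d' + a) := by
      have h := csSup_le ⟨s₀, hs₀⟩ (fun s hs => show s ≤ L * r * (d' + a) / dz by
        rw [le_div_iff₀ hdz]
        nlinarith [hupX s hs, mul_le_mul_of_nonneg_left (le_csSup hbddS hs)
          (mul_nonneg hL0.le hrpos.le)])
      have := mul_le_mul_of_nonneg_right h hdz.le
      rwa [div_mul_cancel₀ _ (ne_of_gt hdz)] at this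
    constructor
    · positivity
    calc a / b ≤ a / (d' * r / (L * (dz + r))) :=
        div_le_div_of_nonneg_left ha0 hm0 hb
    _ ≤ H r := by
        rw [div_le_iff₀ hm0]
        have hHm : H r * (d' * r / (L * (dz + r))) =
            L * r * (d' + 2 * L * r * d' / dz) / dz := by
          simp only [hH]; exact hHm_aux L r dz d' hL0 hrpos hdz
        rw [hHm, le_div_iff₀ hdz]
        nlinarith [hadz, mul_le_mul_of_nonneg_left haup
          (mul_nonneg hL0.le hrpos.le)]
  -- limsup part
  have hIoo : Set.Ioo (0:ℝ) r0 ∈ nhdsWithin (0:ℝ) (Set.Ioi 0) :=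
    Ioo_mem_nhdsGT_of_mem ⟨le_refl 0, hr00⟩
  have hev : ∀ᶠ r in nhdsWithin (0:ℝ) (Set.Ioi 0),
      sSup (S r) / sInf (S r) ≤ H r :=
    eventually_of_mem hIoo (fun r hr => (key r hr).2)
  have hev0 : ∀ᶠ r in nhdsWithin (0:ℝ) (Set.Ioi 0),
      0 ≤ sSup (S r) / sInf (S r) :=
    eventually_of_mem hIoo (fun r hr => (key r hr).1)
  have hHcont : Continuous H := by
    simp only [hH]; fun_prop
  have hH0 : Tendsto H (nhdsWithin (0:ℝ) (Set.Ioi 0)) (𝓝 (L ^ 2)) := by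
    have h1 : Tendsto H (𝓝 (0:ℝ)) (𝓝 (H 0)) := hHcont.tendsto 0
    have h2 : H 0 = L ^ 2 := by simp only [hH]; field_simp; ring
    rw [h2] at h1
    exact h1.mono_left nhdsWithin_le_nhds
  have hcobdd : IsCoboundedUnder (· ≤ ·) (nhdsWithin (0:ℝ) (Set.Ioi 0))
      (fun r => sSup (S r) / sInf (S r)) := by
    refine Filter.IsBoundedUnder.isCoboundedUnder_le ⟨0, ?_⟩
    simpa [eventually_map] using hev0
  have hbdd : IsBoundedUnder (· ≤ ·) (nhdsWithin (0:ℝ) (Set.Ioi 0)) H :=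
    hH0.isBoundedUnder_le
  have hfin := limsup_le_limsup hev hcobdd hbdd
  rw [hH0.limsup_eq] at hfin
  exact hfin
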